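/- Suppose (A2) holds. Then the vector field F is locally Lipschitz continuous on ℝⁿ (in particular, continuous), even though its defining formula contains the factor 1/‖∇h(θ)‖². -/

import Mathlib

open scoped RealInnerProductSpace
open Set Filter

open Classical in
/-- The safe-gradient-flow vector field `F`. -/
noncomputable def Fvec {n : ℕ} (J h : EuclideanSpace ℝ (Fin n) → ℝ) (c : ℝ)
    (θ : EuclideanSpace ℝ (Fin n)) : EuclideanSpace ℝ (Fin n) :=
  if gradient h θ = 0 then -gradient J θ
  else -gradient J θ +
    (max (⟪gradient J θ, gradient h θ⟫ - c * h θ) 0 / ‖gradient h θ‖ ^ 2) • gradient h θ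

lemma lipschitzOnWith_congr' {α β : Type*} [PseudoEMetricSpace α] [PseudoEMetricSpace β]
    {K : NNReal} {f g : α → β} {s : Set α}
    (hf : LipschitzOnWith K f s) (hfg : Set.EqOn f g s) : LipschitzOnWith K g s := by
  intro x hx y hy
  rw [← hfg hx, ← hfg hy]
  exact hf hx hy

lemma clamp_inv_lipschitz (b : ℝ) (hb : 0 < b) :
    LipschitzWith ((b⁻¹ * b⁻¹).toNNReal) (fun s : ℝ => (max s b)⁻¹) := by
  apply LipschitzWith.of_dist_le_mul
  intro s t
  have hs : b ≤ max s b := le_max_right _ _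
  have ht : b ≤ max t b := le_max_right _ _
  have hs0 : 0 < max s b := lt_of_lt_of_le hb hs
  have ht0 : 0 < max t b := lt_of_lt_of_le hb ht
  rw [Real.dist_eq, Real.dist_eq]
  have key : (max s b)⁻¹ - (max t b)⁻¹ = (max t b - max s b) / (max s b * max t b) := by
    field_simp
  rw [key, abs_div, Real.coe_toNNReal _ (by positivity)]
  have h1 : |max t b - max s b| ≤ |t - s| := abs_max_sub_max_le_abs _ _ _
  have h2 : b * b ≤ |max s b * max t b| := by
    rw [abs_of_pos (by positivity)]
    exact mul_le_mul hs ht hb.le hs0.le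
  calc |max t b - max s b| / |max s b * max t b| ≤ |t - s| / (b * b) :=
        div_le_div₀ (abs_nonneg _) h1 (by positivity) h2
    _ = b⁻¹ * b⁻¹ * |s - t| := by rw [abs_sub_comm]; field_simp

set_option maxHeartbeats 1000000 in
/-- under (A2), the vector field `F` is locally Lipschitz on ℝⁿ,
in particular continuous. -/
theorem stmt1 {n : ℕ} (hn : 1 ≤ n) (J h : EuclideanSpace ℝ (Fin n) → ℝ) (c : ℝ) (hc : 0 < c)
    (hJ : ContDiff ℝ 1 J) (hJ' : LocallyLipschitz (gradient J))
    (hh : ContDiff ℝ 1 h) (hh' : LocallyLipschitz (gradient h))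
    (hA2 : (∃ θ, 0 ≤ h θ) ∧ ∀ ρ ∈ Set.range h, ρ ≤ 0 →
      ∃ L > 0, ∀ θ, h θ ≤ 0 → ρ ≤ h θ → L < ‖gradient h θ‖) :
    LocallyLipschitz (Fvec J h c) ∧ Continuous (Fvec J h c) := by
  have hE : (1:ℕ) = 1 := rfl
  -- basic locally Lipschitz building blocks
  have hhl : LocallyLipschitz h := hh.locallyLipschitz
  have hinner : LocallyLipschitz (fun θ : EuclideanSpace ℝ (Fin n) => ⟪gradient J θ, gradient h θ⟫) := by
    have hbil : LocallyLipschitz (fun p : EuclideanSpace ℝ (Fin n) × EuclideanSpace ℝ (Fin n) => ⟪p.1, p.2⟫) :=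
      (ContDiff.inner ℝ (contDiff_fst) (contDiff_snd)).locallyLipschitz
    have h2 := hbil.comp (hJ'.prodMk hh')
    exact h2
  have hu : LocallyLipschitz (fun θ : EuclideanSpace ℝ (Fin n) => max (⟪gradient J θ, gradient h θ⟫ - c * h θ) 0) := by
    have hsub : LocallyLipschitz (fun p : ℝ × ℝ => p.1 - c * p.2) := by
      have hcd : ContDiff ℝ 1 (fun p : ℝ × ℝ => p.1 - c * p.2) :=
        contDiff_fst.sub (contDiff_const.mul contDiff_snd)
      exact hcd.locallyLipschitz
    have h2 := (hsub.comp (hinner.prodMk hhl)).max_const 0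
    exact h2
  have hnegJ : LocallyLipschitz (fun θ : EuclideanSpace ℝ (Fin n) => -gradient J θ) := by
    have : LocallyLipschitz (fun v : EuclideanSpace ℝ (Fin n) => -v) := by
      have hcd : ContDiff ℝ 1 (fun v : EuclideanSpace ℝ (Fin n) => -v) := contDiff_id.neg
      exact hcd.locallyLipschitz
    have h2 := this.comp hJ'
    exact h2
  have key : LocallyLipschitz (Fvec J h c) := by
    intro x
    by_cases hx : gradient h x = 0
    · -- here h x > 0 by (A2)
      have hpos : 0 < h x := by
        by_contra hle
        push_neg at hle
        obtain ⟨L, hL, hall⟩ := hA2.2 (h x) ⟨x, rfl⟩ hle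
        have := hall x hle le_rfl
        rw [hx, norm_zero] at this
        linarith
      set s : Set (EuclideanSpace ℝ (Fin n)) := {θ | ⟪gradient J θ, gradient h θ⟫ - c * h θ < 0} with hs_def
      have hso : IsOpen s := by
        have hcont : Continuous (fun θ : EuclideanSpace ℝ (Fin n) => ⟪gradient J θ, gradient h θ⟫ - c * h θ) :=
          (hJ'.continuous.inner hh'.continuous).sub (continuous_const.mul hh.continuous)
        exact isOpen_lt hcont continuous_const
      have hxs : x ∈ s := by
        simp only [hs_def, mem_setOf_eq, hx, inner_zero_right]
        nlinarith
      obtain ⟨K, t, ht, hK⟩ := hnegJ x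
      refine ⟨K, t ∩ s, inter_mem ht (hso.mem_nhds hxs), ?_⟩
      refine lipschitzOnWith_congr' (hK.mono inter_subset_left) (fun θ hθ => ?_)
      have hθs : ⟪gradient J θ, gradient h θ⟫ - c * h θ < 0 := hθ.2
      unfold Fvec
      by_cases hgθ : gradient h θ = 0
      · simp [hgθ]
      · rw [if_neg hgθ, max_eq_right hθs.le, zero_div, zero_smul, add_zero]
    · -- gradient h x ≠ 0
      have hε : 0 < ‖gradient h x‖ := norm_pos_iff.mpr hx
      set b : ℝ := ‖gradient h x‖ ^ 2 / 2 with hb_def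
      have hb : 0 < b := by positivity
      set s : Set (EuclideanSpace ℝ (Fin n)) := {θ | b < ‖gradient h θ‖ ^ 2} with hs_def
      have hso : IsOpen s := isOpen_lt continuous_const (hh'.continuous.norm.pow 2)
      have hxs : x ∈ s := by
        simp only [hs_def, mem_setOf_eq, hb_def]
        nlinarith
      -- modified globally locally Lipschitz field
      set G : EuclideanSpace ℝ (Fin n) → EuclideanSpace ℝ (Fin n) := fun θ => -gradient J θ +
        ((max (⟪gradient J θ, gradient h θ⟫ - c * h θ) 0) *
          (max (‖gradient h θ‖ ^ 2) b)⁻¹) • gradient h θ with hG_def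
      have hw : LocallyLipschitz (fun θ : EuclideanSpace ℝ (Fin n) => (max (‖gradient h θ‖ ^ 2) b)⁻¹) := by
        have hns : LocallyLipschitz (fun θ : EuclideanSpace ℝ (Fin n) => ‖gradient h θ‖ ^ 2) :=
          ((contDiff_norm_sq ℝ).locallyLipschitz).comp hh'
        have h2 := ((clamp_inv_lipschitz b hb).locallyLipschitz).comp hns
        exact h2
      have hmul : LocallyLipschitz (fun θ : EuclideanSpace ℝ (Fin n) =>
          (max (⟪gradient J θ, gradient h θ⟫ - c * h θ) 0) *
            (max (‖gradient h θ‖ ^ 2) b)⁻¹) := by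
        have : LocallyLipschitz (fun p : ℝ × ℝ => p.1 * p.2) := by
          have hcd : ContDiff ℝ 1 (fun p : ℝ × ℝ => p.1 * p.2) := contDiff_fst.mul contDiff_snd
          exact hcd.locallyLipschitz
        have h2 := this.comp (hu.prodMk hw)
        exact h2
      have hsmul : LocallyLipschitz (fun θ : EuclideanSpace ℝ (Fin n) =>
          ((max (⟪gradient J θ, gradient h θ⟫ - c * h θ) 0) *
            (max (‖gradient h θ‖ ^ 2) b)⁻¹) • gradient h θ) := by
        have : LocallyLipschitz (fun p : ℝ × EuclideanSpace ℝ (Fin n) => p.1 • p.2) := by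
          have hcd : ContDiff ℝ 1 (fun p : ℝ × EuclideanSpace ℝ (Fin n) => p.1 • p.2) :=
            contDiff_fst.smul contDiff_snd
          exact hcd.locallyLipschitz
        have h2 := this.comp (hmul.prodMk hh')
        exact h2
      have hG : LocallyLipschitz G := by
        have : LocallyLipschitz (fun p : EuclideanSpace ℝ (Fin n) × EuclideanSpace ℝ (Fin n) => p.1 + p.2) := by
          have hcd : ContDiff ℝ 1 (fun p : EuclideanSpace ℝ (Fin n) × EuclideanSpace ℝ (Fin n) => p.1 + p.2) :=
            contDiff_fst.add contDiff_snd
          exact hcd.locallyLipschitz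
        have h2 := this.comp (hnegJ.prodMk hsmul)
        exact h2
      obtain ⟨K, t, ht, hK⟩ := hG x
      refine ⟨K, t ∩ s, inter_mem ht (hso.mem_nhds hxs), ?_⟩
      refine lipschitzOnWith_congr' (hK.mono inter_subset_left) (fun θ hθ => ?_)
      have hθs : b < ‖gradient h θ‖ ^ 2 := hθ.2
      have hgθ : gradient h θ ≠ 0 := by
        intro h0
        rw [h0, norm_zero] at hθs
        simp at hθs
        linarith
      unfold Fvec
      rw [if_neg hgθ, hG_def]
      simp only [max_eq_left hθs.le, div_eq_mul_inv]
  exact ⟨key, key.continuous⟩
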